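/- Let A, B, C_1, …, C_p, D_1, …, D_q be matrices in ℂ^{r×r} such that each D_j + kI is invertible for every integer k ≥ 0, A and B − I are positive stable, all needed gamma matrix functions are defined, and AB = BA. Then for all z in the region of absolute convergence, z A (d/dz) ₚR_q(A,B;z) = ₚR_q(A, B−I; z) − (B−I) · ₚR_q(A,B;z). -/

import Mathlib

open scoped BigOperators
open Matrix

noncomputable section

attribute [local instance] Matrix.frobeniusNormedAddCommGroup Matrix.frobeniusNormedRing
  Matrix.frobeniusNormedSpace Matrix.frobeniusNormedAlgebra

/-- `t ^ M = exp (M ln t)` for a real `t` and a square complex matrix `M`. -/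
def matRPow {r : ℕ} (M : Matrix (Fin r) (Fin r) ℂ) (t : ℝ) : Matrix (Fin r) (Fin r) ℂ :=
  NormedSpace.exp ((Real.log t : ℂ) • M)

/-- The gamma matrix function `Γ(A) = ∫₀^∞ e^{-t} t^{A-I} dt`. -/
def matGamma {r : ℕ} (A : Matrix (Fin r) (Fin r) ℂ) : Matrix (Fin r) (Fin r) ℂ :=
  ∫ t in Set.Ioi (0 : ℝ), Real.exp (-t) • matRPow (A - 1) t

/-- A complex square matrix is positive stable if every eigenvalue has positive real part. -/
def PosStable {r : ℕ} (A : Matrix (Fin r) (Fin r) ℂ) : Prop :=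
  ∀ μ ∈ spectrum ℂ A, 0 < μ.re

/-- The matrix Pochhammer symbol `(A)_n = A (A + I) ⋯ (A + (n-1) I)`. -/
def matPoch {r : ℕ} (A : Matrix (Fin r) (Fin r) ℂ) (n : ℕ) : Matrix (Fin r) (Fin r) ℂ :=
  ((List.range n).map (fun k => A + (k : ℂ) • (1 : Matrix (Fin r) (Fin r) ℂ))).prod

/-- The `n`-th coefficient matrix
`Γ⁻¹(nA+B) (C₁)_n ⋯ (C_p)_n (D₁)ₙ⁻¹ ⋯ (D_q)ₙ⁻¹` of the series `ₚR_q(A,B;z)`. -/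
def Rcoeff {r p q : ℕ} (A B : Matrix (Fin r) (Fin r) ℂ)
    (C : Fin p → Matrix (Fin r) (Fin r) ℂ) (D : Fin q → Matrix (Fin r) (Fin r) ℂ)
    (n : ℕ) : Matrix (Fin r) (Fin r) ℂ :=
  (matGamma ((n : ℂ) • A + B))⁻¹ *
    (List.ofFn (fun i => matPoch (C i) n)).prod *
    (List.ofFn (fun j => (matPoch (D j) n)⁻¹)).prod

/-- The matrix function `ₚR_q(A, B; z)`. -/
def Rfun {r p q : ℕ} (A B : Matrix (Fin r) (Fin r) ℂ)
    (C : Fin p → Matrix (Fin r) (Fin r) ℂ) (D : Fin q → Matrix (Fin r) (Fin r) ℂ)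
    (z : ℂ) : Matrix (Fin r) (Fin r) ℂ :=
  ∑' n : ℕ, (z ^ n / (n.factorial : ℂ)) • Rcoeff A B C D n

/-- Absolute convergence of the series `ₚR_q(A, B; z)` at the point `z`. -/
def RabsConv {r p q : ℕ} (A B : Matrix (Fin r) (Fin r) ℂ)
    (C : Fin p → Matrix (Fin r) (Fin r) ℂ) (D : Fin q → Matrix (Fin r) (Fin r) ℂ)
    (z : ℂ) : Prop :=
  Summable (fun n : ℕ => ‖(z ^ n / (n.factorial : ℂ)) • Rcoeff A B C D n‖)

/-- `z` lies in the (open) region of absolute convergence of the series `ₚR_q(A, B; ·)`: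
some point of strictly larger modulus still gives absolute convergence. -/
def InRegion {r p q : ℕ} (A B : Matrix (Fin r) (Fin r) ℂ)
    (C : Fin p → Matrix (Fin r) (Fin r) ℂ) (D : Fin q → Matrix (Fin r) (Fin r) ℂ)
    (z : ℂ) : Prop :=
  ∃ ρ : ℝ, ‖z‖ < ρ ∧ Summable (fun n : ℕ => ‖Rcoeff A B C D n‖ * ρ ^ n / (n.factorial : ℝ))

/-- The Euler operator `θ = z d/dz` applied termwise to the series `ₚR_q(A, B; z)`. -/
def thetaR {r p q : ℕ} (A B : Matrix (Fin r) (Fin r) ℂ)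
    (C : Fin p → Matrix (Fin r) (Fin r) ℂ) (D : Fin q → Matrix (Fin r) (Fin r) ℂ)
    (z : ℂ) : Matrix (Fin r) (Fin r) ℂ :=
  ∑' n : ℕ, (((n : ℂ) * z ^ n) / (n.factorial : ℂ)) • Rcoeff A B C D n


set_option maxHeartbeats 1000000

namespace PRqAux
open NormedSpace MeasureTheory Set Filter
variable {r : ℕ}

abbrev frobNACG (r : ℕ) : NormedAddCommGroup (Matrix (Fin r) (Fin r) ℂ) :=
  { Matrix.frobeniusNormedAddCommGroup with
    toMetricSpace := Matrix.frobeniusNormedAddCommGroup.toMetricSpace.replaceTopology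
      (U := instTopologicalSpaceMatrix) rfl }
attribute [local instance] frobNACG
abbrev frobNR (r : ℕ) : NormedRing (Matrix (Fin r) (Fin r) ℂ) :=
  { frobNACG r, Matrix.instRing with norm_mul_le := Matrix.frobenius_norm_mul }
attribute [local instance] frobNR
abbrev frobNS (R : Type*) [NormedField R] [NormedSpace R ℂ] (r : ℕ) :
    @NormedSpace R (Matrix (Fin r) (Fin r) ℂ) _ (frobNACG r).toSeminormedAddCommGroup :=
  { norm_smul_le := fun a b => (Matrix.frobeniusNormedSpace (R := R)).norm_smul_le a b }
attribute [local instance] frobNS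
abbrev frobNA (R : Type*) [NormedField R] [NormedAlgebra R ℂ] (r : ℕ) :
    @NormedAlgebra R (Matrix (Fin r) (Fin r) ℂ) _ (frobNR r).toSeminormedRing :=
  { frobNS R r, Matrix.instAlgebra with }
attribute [local instance] frobNA

lemma exp_smul_one (c : ℂ) :
    exp (c • (1 : Matrix (Fin r) (Fin r) ℂ)) = Complex.exp c • (1 : Matrix (Fin r) (Fin r) ℂ) := by
  rw [← Algebra.algebraMap_eq_smul_one, ← algebraMap_exp_comm, Complex.exp_eq_exp_ℂ,
    Algebra.algebraMap_eq_smul_one]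

lemma single_term_le_exp {x δ : ℝ} (hx : 0 ≤ x) (hδ : 0 < δ) (n : ℕ) :
    x ^ n / n.factorial ≤ Real.exp (δ * x) / δ ^ n := by
  rw [div_le_div_iff₀ (by positivity) (by positivity)]
  have h1 : (δ * x) ^ n / n.factorial ≤ Real.exp (δ * x) := by
    calc (δ * x) ^ n / n.factorial ≤ ∑ i ∈ Finset.range (n+1), (δ * x) ^ i / i.factorial := by
          refine Finset.single_le_sum (f := fun i => (δ*x)^i / i.factorial) ?_ (Finset.self_mem_range_succ n)
          intro i _; positivity
      _ ≤ Real.exp (δ * x) := Real.sum_le_exp_of_nonneg (by positivity) _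
  rw [div_le_iff₀ (by positivity)] at h1
  calc x ^ n * δ ^ n = (δ * x) ^ n := by rw [mul_pow]; ring
    _ ≤ Real.exp (δ * x) * n.factorial := h1

lemma vec_decay {M : Matrix (Fin r) (Fin r) ℂ} (hM : PosStable M) (v : Fin r → ℂ) :
    ∃ K ε : ℝ, 0 ≤ K ∧ 0 < ε ∧ ∀ s : ℝ, s ≤ 0 →
      ‖(exp ((s : ℂ) • M)).mulVec v‖ ≤ K * Real.exp (ε * s) := by
  classical
  set T : Module.End ℂ (Fin r → ℂ) := M.mulVecLin with hT
  have htop : v ∈ ⨆ μ : ℂ, T.maxGenEigenspace μ := by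
    rw [Module.End.iSup_maxGenEigenspace_eq_top]; trivial
  refine Submodule.iSup_induction (motive := fun w => ∃ K ε : ℝ, 0 ≤ K ∧ 0 < ε ∧ ∀ s : ℝ, s ≤ 0 →
      ‖(exp ((s : ℂ) • M)).mulVec w‖ ≤ K * Real.exp (ε * s)) _ htop ?_ ?_ ?_
  · -- main case
    intro μ x hx
    by_cases hx0 : x = 0
    · exact ⟨0, 1, le_refl 0, one_pos, fun s _ => by simp [hx0]⟩
    obtain ⟨k, hk⟩ := (Module.End.mem_maxGenEigenspace T μ x).1 hx
    set N : Matrix (Fin r) (Fin r) ℂ := M - μ • 1 with hNdef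
    have hNT : ∀ y : Fin r → ℂ, N.mulVec y = (T - μ • (1 : Module.End ℂ (Fin r → ℂ))) y := by
      intro y
      simp [hNdef, Matrix.sub_mulVec, Matrix.smul_mulVec, Matrix.one_mulVec, hT,
        Matrix.mulVecLin_apply]
    have hNpow : ∀ (n : ℕ) (y : Fin r → ℂ),
        (N ^ n).mulVec y = ((T - μ • (1 : Module.End ℂ (Fin r → ℂ))) ^ n) y := by
      intro n
      induction n with
      | zero => intro y; simp [Matrix.one_mulVec]
      | succ m ih =>
        intro y
        rw [pow_succ', pow_succ', ← Matrix.mulVec_mulVec]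
        rw [hNT, ih]
        rfl
    have hNk : (N ^ k).mulVec x = 0 := by rw [hNpow]; exact hk
    -- μ is an eigenvalue
    have hμ : μ ∈ spectrum ℂ M := by
      by_contra hns
      have hunit : IsUnit ((algebraMap ℂ (Matrix (Fin r) (Fin r) ℂ)) μ - M) := by
        rw [spectrum.mem_iff, not_not] at hns; exact hns
      have hinj : Function.Injective ((algebraMap ℂ (Matrix (Fin r) (Fin r) ℂ)) μ - M).mulVec :=
        Matrix.mulVec_injective_iff_isUnit.2 hunit
      have hinjN : Function.Injective N.mulVec := by
        intro a b hab
        apply hinj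
        have hrw : ((algebraMap ℂ (Matrix (Fin r) (Fin r) ℂ)) μ - M) = -N := by
          rw [hNdef, Algebra.algebraMap_eq_smul_one]; abel
        rw [hrw, Matrix.neg_mulVec, Matrix.neg_mulVec, hab]
      have hinjNk : ∀ n : ℕ, Function.Injective (N ^ n).mulVec := by
        intro n
        induction n with
        | zero => intro a b hab; simpa [Matrix.one_mulVec] using hab
        | succ m ih =>
          intro a b hab
          rw [pow_succ', ← Matrix.mulVec_mulVec, ← Matrix.mulVec_mulVec] at hab
          exact ih (hinjN hab)
      exact hx0 (hinjNk k (by rw [hNk, Matrix.mulVec_zero]))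
    have hre : 0 < μ.re := hM μ hμ
    set δ : ℝ := μ.re / 2 with hδdef
    have hδ : 0 < δ := by positivity
    have key : ∀ s : ℝ, (exp ((s:ℂ) • M)).mulVec x
        = Complex.exp ((s:ℂ) * μ) •
          ∑ n ∈ Finset.range k, ((n.factorial : ℂ))⁻¹ • ((s:ℂ) ^ n • ((N ^ n).mulVec x)) := by
      intro s
      have hsplit : (s:ℂ) • M = ((s:ℂ) * μ) • (1 : Matrix (Fin r) (Fin r) ℂ) + (s:ℂ) • N := by
        rw [hNdef, smul_sub]; module
      have hcomm : Commute (((s:ℂ)*μ) • (1 : Matrix (Fin r) (Fin r) ℂ)) ((s:ℂ) • N) :=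
        ((Commute.one_left N).smul_left _).smul_right _
      rw [hsplit, exp_add_of_commute hcomm, exp_smul_one, smul_mul_assoc, one_mul,
        Matrix.smul_mulVec]
      congr 1
      let L : Matrix (Fin r) (Fin r) ℂ →ₗ[ℂ] (Fin r → ℂ) :=
        { toFun := fun X => X.mulVec x
          map_add' := fun X Y => Matrix.add_mulVec X Y x
          map_smul' := fun c X => Matrix.smul_mulVec c X x }
      have hE : exp ((s:ℂ) • N) = ∑' n : ℕ, ((n.factorial:ℂ))⁻¹ • ((s:ℂ) • N) ^ n := by
        rw [exp_eq_tsum ℂ]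
      have hmap : (exp ((s:ℂ) • N)).mulVec x
          = ∑' n : ℕ, (((n.factorial:ℂ))⁻¹ • ((s:ℂ) • N) ^ n).mulVec x := by
        rw [hE]
        exact (LinearMap.toContinuousLinearMap L).map_tsum (expSeries_summable' _)
      rw [hmap, tsum_eq_sum (s := Finset.range k) ?_]
      · apply Finset.sum_congr rfl
        intro n _
        rw [smul_pow, Matrix.smul_mulVec, Matrix.smul_mulVec]
      · intro n hn
        have hnk : k ≤ n := by simpa using Finset.mem_range.not.1 hn
        have hzero : (N ^ n).mulVec x = 0 := by
          have hsp : N ^ n = N ^ (n - k) * N ^ k := by rw [← pow_add]; congr 1; omega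
          rw [hsp, ← Matrix.mulVec_mulVec, hNk, Matrix.mulVec_zero]
        rw [smul_pow, Matrix.smul_mulVec, Matrix.smul_mulVec, hzero]
        simp
    refine ⟨∑ n ∈ Finset.range k, ‖(N ^ n).mulVec x‖ / δ ^ n, δ, ?_, hδ, ?_⟩
    · apply Finset.sum_nonneg; intro n _; positivity
    intro s hs
    rw [key s, norm_smul]
    have habs : ‖Complex.exp ((s:ℂ)*μ)‖ = Real.exp (s * μ.re) := by
      rw [Complex.norm_exp]
      congr 1
      simp [Complex.mul_re]
    rw [habs]
    have hsum : ‖∑ n ∈ Finset.range k, ((n.factorial:ℂ))⁻¹ • ((s:ℂ)^n • (N^n).mulVec x)‖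
        ≤ ∑ n ∈ Finset.range k, (-s)^n / n.factorial * ‖(N^n).mulVec x‖ := by
      refine (norm_sum_le _ _).trans (Finset.sum_le_sum ?_)
      intro n _
      rw [norm_smul, norm_smul, norm_inv, Complex.norm_natCast, norm_pow, Complex.norm_real,
        Real.norm_eq_abs, abs_of_nonpos hs]
      rw [inv_mul_eq_div, div_mul_eq_mul_div, mul_comm]
    have hterm2 : ∀ n ∈ Finset.range k, (-s)^n / n.factorial * ‖(N^n).mulVec x‖
        ≤ ‖(N^n).mulVec x‖ / δ^n * Real.exp (δ * (-s)) := by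
      intro n _
      have := single_term_le_exp (x := -s) (by linarith) hδ n
      calc (-s)^n / n.factorial * ‖(N^n).mulVec x‖
          ≤ Real.exp (δ * (-s)) / δ^n * ‖(N^n).mulVec x‖ := by
            apply mul_le_mul_of_nonneg_right this (norm_nonneg _)
        _ = ‖(N^n).mulVec x‖ / δ^n * Real.exp (δ * (-s)) := by ring
    calc Real.exp (s*μ.re) * ‖∑ n ∈ Finset.range k, ((n.factorial:ℂ))⁻¹ • ((s:ℂ)^n • (N^n).mulVec x)‖
        ≤ Real.exp (s*μ.re) * ∑ n ∈ Finset.range k, (-s)^n / n.factorial * ‖(N^n).mulVec x‖ := by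
          apply mul_le_mul_of_nonneg_left hsum (Real.exp_pos _).le
      _ ≤ Real.exp (s*μ.re) * ∑ n ∈ Finset.range k, ‖(N^n).mulVec x‖ / δ^n * Real.exp (δ * (-s)) := by
          apply mul_le_mul_of_nonneg_left (Finset.sum_le_sum hterm2) (Real.exp_pos _).le
      _ = (∑ n ∈ Finset.range k, ‖(N^n).mulVec x‖ / δ^n) * (Real.exp (s*μ.re) * Real.exp (δ * (-s))) := by
          rw [← Finset.sum_mul]; ring
      _ = (∑ n ∈ Finset.range k, ‖(N^n).mulVec x‖ / δ^n) * Real.exp (δ * s) := by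
          rw [← Real.exp_add]
          congr 2
          rw [hδdef]; ring
  · exact ⟨0, 1, le_refl 0, one_pos, fun s _ => by simp⟩
  · rintro x y ⟨K₁, ε₁, hK₁, hε₁, h₁⟩ ⟨K₂, ε₂, hK₂, hε₂, h₂⟩
    refine ⟨K₁ + K₂, min ε₁ ε₂, by positivity, lt_min hε₁ hε₂, fun s hs => ?_⟩
    rw [Matrix.mulVec_add]
    calc ‖(exp ((s : ℂ) • M)).mulVec x + (exp ((s : ℂ) • M)).mulVec y‖
        ≤ ‖(exp ((s : ℂ) • M)).mulVec x‖ + ‖(exp ((s : ℂ) • M)).mulVec y‖ := norm_add_le _ _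
      _ ≤ K₁ * Real.exp (ε₁ * s) + K₂ * Real.exp (ε₂ * s) := add_le_add (h₁ s hs) (h₂ s hs)
      _ ≤ (K₁ + K₂) * Real.exp (min ε₁ ε₂ * s) := by
          have e1 : Real.exp (ε₁ * s) ≤ Real.exp (min ε₁ ε₂ * s) :=
            Real.exp_le_exp.2 (mul_le_mul_of_nonpos_right (min_le_left _ _) hs)
          have e2 : Real.exp (ε₂ * s) ≤ Real.exp (min ε₁ ε₂ * s) :=
            Real.exp_le_exp.2 (mul_le_mul_of_nonpos_right (min_le_right _ _) hs)
          nlinarith [Real.exp_pos (min ε₁ ε₂ * s)]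
lemma matRPow_sub_one (M : Matrix (Fin r) (Fin r) ℂ) {t : ℝ} (ht : 0 < t) :
    matRPow (M - 1) t = (t : ℂ)⁻¹ • matRPow M t := by
  have hsplit : (Real.log t : ℂ) • (M - 1)
      = (-(Real.log t : ℂ)) • (1 : Matrix (Fin r) (Fin r) ℂ) + (Real.log t : ℂ) • M := by
    rw [smul_sub]; module
  have hcomm : Commute ((-(Real.log t : ℂ)) • (1 : Matrix (Fin r) (Fin r) ℂ))
      ((Real.log t : ℂ) • M) := ((Commute.one_left M).smul_left _).smul_right _
  rw [matRPow, matRPow, hsplit, exp_add_of_commute hcomm, exp_smul_one, smul_mul_assoc, one_mul]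
  congr 1
  rw [show (-(Real.log t : ℂ)) = ((-Real.log t : ℝ) : ℂ) by push_cast; ring,
    ← Complex.ofReal_exp, Real.exp_neg, Real.exp_log ht, Complex.ofReal_inv]


lemma ofReal_smul_mat (a : ℝ) (X : Matrix (Fin r) (Fin r) ℂ) : ((a : ℂ)) • X = a • X := by
  rw [show ((a : ℂ)) = algebraMap ℝ ℂ a from rfl]
  exact algebraMap_smul ℂ a X

lemma norm_exp_le_aux (X : Matrix (Fin r) (Fin r) ℂ) :
    ‖exp X‖ ≤ ‖(1 : Matrix (Fin r) (Fin r) ℂ)‖ + Real.exp ‖X‖ := by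
  have hnorm : Summable fun n : ℕ => ‖((n.factorial : ℂ))⁻¹ • X ^ n‖ := norm_expSeries_summable' X
  have hsum : Summable fun n : ℕ => ((n.factorial : ℂ))⁻¹ • X ^ n := expSeries_summable' X
  have hreal : Summable fun n : ℕ => ‖X‖ ^ n / n.factorial := Real.summable_pow_div_factorial ‖X‖
  have hterm : ∀ n : ℕ, ‖((n+1).factorial : ℂ)⁻¹ • X ^ (n+1)‖ ≤ ‖X‖ ^ (n+1) / (n+1).factorial := by
    intro n
    rw [norm_smul, norm_inv, Complex.norm_natCast, inv_mul_eq_div]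
    exact div_le_div_of_nonneg_right (norm_pow_le' X (Nat.succ_pos n)) (by positivity)
  have hE : exp X = ∑' n : ℕ, ((n.factorial : ℂ))⁻¹ • X ^ n := by rw [exp_eq_tsum ℂ]
  have h0 := Summable.tsum_eq_zero_add hsum
  rw [hE, h0]
  have hle1 : ‖((Nat.factorial 0 : ℂ))⁻¹ • X ^ 0‖ = ‖(1 : Matrix (Fin r) (Fin r) ℂ)‖ := by simp
  calc ‖((Nat.factorial 0 : ℂ))⁻¹ • X ^ 0 + ∑' n : ℕ, ((n+1).factorial : ℂ)⁻¹ • X ^ (n+1)‖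
      ≤ ‖((Nat.factorial 0 : ℂ))⁻¹ • X ^ 0‖ + ‖∑' n : ℕ, ((n+1).factorial : ℂ)⁻¹ • X ^ (n+1)‖ :=
        norm_add_le _ _
    _ ≤ ‖(1 : Matrix (Fin r) (Fin r) ℂ)‖ + Real.exp ‖X‖ := by
        rw [hle1]
        apply add_le_add_right
        have hnorm' : Summable fun n : ℕ => ‖((n+1).factorial : ℂ)⁻¹ • X ^ (n+1)‖ :=
          (summable_nat_add_iff 1).2 hnorm
        refine (norm_tsum_le_tsum_norm hnorm').trans ?_
        have hreal' : Summable fun n : ℕ => ‖X‖ ^ (n+1) / (n+1).factorial :=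
          (summable_nat_add_iff 1).2 hreal
        refine (Summable.tsum_le_tsum hterm hnorm' hreal').trans ?_
        have h0r := Summable.tsum_eq_zero_add hreal
        have hexp : Real.exp ‖X‖ = ∑' n : ℕ, ‖X‖ ^ n / n.factorial := by
          rw [Real.exp_eq_exp_ℝ, exp_eq_tsum_div]
        rw [hexp, h0r]
        simp only [pow_zero, Nat.factorial_zero, Nat.cast_one]
        nlinarith [tsum_nonneg (L := SummationFilter.unconditional ℕ) (fun n : ℕ => div_nonneg (pow_nonneg (norm_nonneg X) (n+1)) (Nat.cast_nonneg ((n+1).factorial))) ]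
lemma mat_decay {M : Matrix (Fin r) (Fin r) ℂ} (hM : ∀ μ ∈ spectrum ℂ M, 0 < μ.re) :
    ∃ c ε : ℝ, 0 ≤ c ∧ 0 < ε ∧ ∀ s : ℝ, s ≤ 0 →
      ‖exp ((s : ℂ) • M)‖ ≤ c * Real.exp (ε * s) := by
  classical
  rcases Nat.eq_zero_or_pos r with h0 | hr
  · subst h0
    refine ⟨0, 1, le_refl 0, one_pos, fun s _ => ?_⟩
    have : exp ((s : ℂ) • M) = 0 := by
      ext i j; exact absurd i.2 (by omega)
    rw [this, norm_zero, zero_mul]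
  · haveI : Nonempty (Fin r) := Fin.pos_iff_nonempty.1 hr
    choose K e hK he hbound using fun j : Fin r => vec_decay hM (Pi.single j 1)
    set ε : ℝ := Finset.univ.inf' Finset.univ_nonempty e with hεdef
    have hε : 0 < ε := by
      rw [hεdef, Finset.lt_inf'_iff]
      intro j _; exact he j
    -- the linear reassembly map
    let L : ((Fin r) → (Fin r) → ℂ) →ₗ[ℂ] Matrix (Fin r) (Fin r) ℂ :=
      { toFun := fun g => Matrix.of fun i j => g j i
        map_add' := fun g g' => rfl
        map_smul' := fun c g => rfl }
    let Lc := LinearMap.toContinuousLinearMap L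
    have hXrec : ∀ X : Matrix (Fin r) (Fin r) ℂ, X = Lc (fun j => X.mulVec (Pi.single j 1)) := by
      intro X
      ext i j
      show X i j = X.mulVec (Pi.single j 1) i
      rw [Matrix.mulVec_single]
      exact (mul_one _).symm
    refine ⟨‖Lc‖ * ∑ j : Fin r, K j, ε, mul_nonneg (norm_nonneg _) (Finset.sum_nonneg fun j _ => hK j), hε, fun s hs => ?_⟩
    have hcol : ∀ j : Fin r, ‖(exp ((s : ℂ) • M)).mulVec (Pi.single j 1)‖
        ≤ (∑ j' : Fin r, K j') * Real.exp (ε * s) := by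
      intro j
      refine (hbound j s hs).trans ?_
      have h1 : Real.exp (e j * s) ≤ Real.exp (ε * s) :=
        Real.exp_le_exp.2 (mul_le_mul_of_nonpos_right (Finset.inf'_le _ (Finset.mem_univ j)) hs)
      have h2 : K j ≤ ∑ j' : Fin r, K j' :=
        Finset.single_le_sum (fun j' _ => hK j') (Finset.mem_univ j)
      nlinarith [Real.exp_pos (e j * s), Real.exp_pos (ε * s), hK j]
    calc ‖exp ((s : ℂ) • M)‖
        = ‖Lc (fun j => (exp ((s : ℂ) • M)).mulVec (Pi.single j 1))‖ := by rw [← hXrec]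
      _ ≤ ‖Lc‖ * ‖(fun j => (exp ((s : ℂ) • M)).mulVec (Pi.single j 1))‖ := Lc.le_opNorm _
      _ ≤ ‖Lc‖ * ((∑ j' : Fin r, K j') * Real.exp (ε * s)) := by
          apply mul_le_mul_of_nonneg_left _ (norm_nonneg Lc)
          rw [pi_norm_le_iff_of_nonneg (mul_nonneg (Finset.sum_nonneg fun j _ => hK j) (Real.exp_pos _).le)]
          exact hcol
      _ = ‖Lc‖ * (∑ j' : Fin r, K j') * Real.exp (ε * s) := by ring

lemma matRPow_decay {M : Matrix (Fin r) (Fin r) ℂ} (hM : ∀ μ ∈ spectrum ℂ M, 0 < μ.re) :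
    ∃ c ε : ℝ, 0 ≤ c ∧ 0 < ε ∧ ∀ t : ℝ, 0 < t → t ≤ 1 →
      ‖NormedSpace.exp ((Real.log t : ℂ) • M)‖ ≤ c * t ^ ε := by
  obtain ⟨c, ε, hc, hε, h⟩ := mat_decay hM
  refine ⟨c, ε, hc, hε, fun t ht ht1 => ?_⟩
  have hlog : Real.log t ≤ 0 := Real.log_nonpos ht.le ht1
  have := h (Real.log t) hlog
  rwa [show Real.exp (ε * Real.log t) = t ^ ε by
    rw [Real.rpow_def_of_pos ht, mul_comm]] at this
lemma norm_matRPow_le_rpow (M : Matrix (Fin r) (Fin r) ℂ) {t : ℝ} (ht : 1 ≤ t) :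
    ‖matRPow M t‖ ≤ ‖(1 : Matrix (Fin r) (Fin r) ℂ)‖ + t ^ ‖M‖ := by
  refine (norm_exp_le_aux _).trans ?_
  have h1 : ‖(Real.log t : ℂ) • M‖ = Real.log t * ‖M‖ := by
    rw [norm_smul, Complex.norm_real, Real.norm_eq_abs, abs_of_nonneg (Real.log_nonneg ht)]
  rw [h1, Real.rpow_def_of_pos (lt_of_lt_of_le one_pos ht)]

lemma matRPow_continuousOn (M : Matrix (Fin r) (Fin r) ℂ) :
    ContinuousOn (fun t : ℝ => matRPow M t) (Ioi 0) := by
  apply exp_continuous.comp_continuousOn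
  apply ContinuousOn.fun_smul _ continuousOn_const
  exact Complex.continuous_ofReal.comp_continuousOn
    (Real.continuousOn_log.mono (fun x hx => ne_of_gt hx))

lemma gammaIntegrand_integrable {M : Matrix (Fin r) (Fin r) ℂ} (hM : PosStable M) :
    IntegrableOn (fun t : ℝ => Real.exp (-t) • matRPow (M - 1) t) (Ioi 0) := by
  have hcont : ContinuousOn (fun t : ℝ => Real.exp (-t) • matRPow (M - 1) t) (Ioi 0) := by
    exact ((Real.continuous_exp.comp continuous_neg).continuousOn).smul (matRPow_continuousOn _)
  have hsplit : Ioc (0:ℝ) 1 ∪ Ioi 1 = Ioi 0 := Ioc_union_Ioi_eq_Ioi zero_le_one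
  rw [← hsplit]
  obtain ⟨c, ε, hc, hε, hbd⟩ := matRPow_decay hM
  apply IntegrableOn.union
  · -- (0, 1]
    have hdom : IntegrableOn (fun t : ℝ => c * (Real.exp (-t) * t ^ (ε - 1))) (Ioc 0 1) :=
      ((Real.GammaIntegral_convergent hε).mono_set Ioc_subset_Ioi_self).const_mul c
    refine Integrable.mono' hdom ((hcont.mono Ioc_subset_Ioi_self).aestronglyMeasurable measurableSet_Ioc) ?_
    refine (ae_restrict_iff' measurableSet_Ioc).2 (Filter.Eventually.of_forall ?_)
    intro t hts
    obtain ⟨ht0, ht1⟩ := hts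
    rw [norm_smul, Real.norm_eq_abs, abs_of_pos (Real.exp_pos _), matRPow_sub_one M ht0,
      norm_smul, norm_inv, Complex.norm_real, Real.norm_eq_abs, abs_of_pos ht0]
    have := hbd t ht0 ht1
    calc Real.exp (-t) * (t⁻¹ * ‖matRPow M t‖) ≤ Real.exp (-t) * (t⁻¹ * (c * t ^ ε)) := by
          have h2 : t⁻¹ * ‖matRPow M t‖ ≤ t⁻¹ * (c * t ^ ε) :=
            mul_le_mul_of_nonneg_left this (by positivity)
          exact mul_le_mul_of_nonneg_left h2 (Real.exp_pos _).le
      _ = c * (Real.exp (-t) * t ^ (ε - 1)) := by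
          rw [Real.rpow_sub_one (ne_of_gt ht0)]
          field_simp
  · -- (1, ∞)
    set κ : ℝ := ‖M - (1 : Matrix (Fin r) (Fin r) ℂ)‖ with hκdef
    have hdom : IntegrableOn (fun t : ℝ =>
        ‖(1 : Matrix (Fin r) (Fin r) ℂ)‖ * (Real.exp (-t) * t ^ ((1:ℝ) - 1))
          + Real.exp (-t) * t ^ (κ + 1 - 1)) (Ioi 1) := by
      apply Integrable.add
      · exact (((Real.GammaIntegral_convergent one_pos).mono_set (Ioi_subset_Ioi zero_le_one)).const_mul _)
      · exact ((Real.GammaIntegral_convergent (by positivity : (0:ℝ) < κ + 1)).mono_set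
          (Ioi_subset_Ioi zero_le_one))
    refine Integrable.mono' hdom ((hcont.mono (Ioi_subset_Ioi zero_le_one)).aestronglyMeasurable measurableSet_Ioi) ?_
    refine (ae_restrict_iff' measurableSet_Ioi).2 (Filter.Eventually.of_forall ?_)
    intro t ht1
    have ht1' : (1:ℝ) ≤ t := le_of_lt ht1
    rw [norm_smul, Real.norm_eq_abs, abs_of_pos (Real.exp_pos _)]
    have hb := norm_matRPow_le_rpow (M - 1) ht1'
    calc Real.exp (-t) * ‖matRPow (M - 1) t‖
        ≤ Real.exp (-t) * (‖(1 : Matrix (Fin r) (Fin r) ℂ)‖ + t ^ κ) := by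
          exact mul_le_mul_of_nonneg_left hb (Real.exp_pos _).le
      _ = ‖(1 : Matrix (Fin r) (Fin r) ℂ)‖ * (Real.exp (-t) * t ^ ((1:ℝ) - 1))
          + Real.exp (-t) * t ^ (κ + 1 - 1) := by
          rw [sub_self, Real.rpow_zero, add_sub_cancel_right]
          ring
lemma posStable_add_one {M : Matrix (Fin r) (Fin r) ℂ} (hM : PosStable M) :
    PosStable (M + 1) := by
  intro μ hμ
  have h1 : μ - 1 ∈ spectrum ℂ M := by
    rw [spectrum.mem_iff] at hμ ⊢
    convert hμ using 2
    rw [_root_.map_sub, _root_.map_one]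
    abel
  have := hM _ h1
  rw [Complex.sub_re, Complex.one_re] at this
  linarith

lemma matRPow_hasDerivAt (M : Matrix (Fin r) (Fin r) ℂ) {t : ℝ} (ht : 0 < t) :
    HasDerivAt (fun u : ℝ => matRPow M u) (M * matRPow (M - 1) t) t := by
  have hinner : HasDerivAt (fun u : ℝ => ((Real.log u : ℝ) : ℂ)) ((t⁻¹ : ℝ) : ℂ) t :=
    (Real.hasDerivAt_log (ne_of_gt ht)).ofReal_comp
  have houter : HasDerivAt (fun z : ℂ => exp (z • M))
      (exp (((Real.log t : ℝ) : ℂ) • M) * M) ((Real.log t : ℝ) : ℂ) :=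
    hasDerivAt_exp_smul_const M _
  have hcomp := HasDerivAt.scomp t houter hinner
  have heq : (fun u : ℝ => exp (((Real.log u : ℝ) : ℂ) • M)) = fun u : ℝ => matRPow M u := rfl
  have hcommute : exp (((Real.log t : ℝ) : ℂ) • M) * M = M * matRPow M t := by
    have : Commute (((Real.log t : ℝ) : ℂ) • M) M := (Commute.refl M).smul_left _
    exact this.exp_left
  convert hcomp using 1
  · rfl
  · rfl
  · rfl
  · rfl
  rw [hcommute, matRPow_sub_one M ht, mul_smul_comm, ← Complex.ofReal_inv,
    ofReal_smul_mat]

lemma matGamma_succ {M : Matrix (Fin r) (Fin r) ℂ} (hM : PosStable M) :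
    matGamma (M + 1) = M * matGamma M := by
  classical
  set g : ℝ → Matrix (Fin r) (Fin r) ℂ := fun t => Real.exp (-t) • matRPow M t with hgdef
  set φ : ℝ → Matrix (Fin r) (Fin r) ℂ :=
    fun t => Real.exp (-t) • (M * matRPow (M - 1) t) with hφdef
  have hM1 : PosStable (M + 1) := posStable_add_one hM
  have hint_g : IntegrableOn g (Ioi 0) := by
    have := gammaIntegrand_integrable hM1
    simpa [add_sub_cancel_right] using this
  have hint_base : IntegrableOn (fun t : ℝ => Real.exp (-t) • matRPow (M - 1) t) (Ioi 0) :=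
    gammaIntegrand_integrable hM
  set L : Matrix (Fin r) (Fin r) ℂ →L[ℂ] Matrix (Fin r) (Fin r) ℂ :=
    ContinuousLinearMap.mul ℂ (Matrix (Fin r) (Fin r) ℂ) M with hLdef
  have hφeq : ∀ t : ℝ, φ t = L (Real.exp (-t) • matRPow (M - 1) t) := by
    intro t
    show Real.exp (-t) • (M * matRPow (M-1) t) = M * (Real.exp (-t) • matRPow (M-1) t)
    rw [mul_smul_comm]
  have hint_φ : IntegrableOn φ (Ioi 0) := by
    have : IntegrableOn (fun t => L (Real.exp (-t) • matRPow (M - 1) t)) (Ioi 0) :=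
      L.integrable_comp hint_base
    exact this.congr_fun (fun t _ => (hφeq t).symm) measurableSet_Ioi
  -- derivative
  have hderiv : ∀ t ∈ Ioi (0:ℝ), HasDerivAt g (φ t - g t) t := by
    intro t ht
    have h1 : HasDerivAt (fun u : ℝ => Real.exp (-u)) (-Real.exp (-t)) t := by
      simpa using (hasDerivAt_neg t).exp
    have h2 := matRPow_hasDerivAt M ht
    have := h1.smul h2
    convert this using 1
    · rfl
    · rfl
    · rfl
    · rfl
    rw [hφdef, hgdef]
    simp only []
    module
  -- limits
  have hlim_top : Tendsto g atTop (nhds 0) := by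
    apply squeeze_zero_norm' (a := fun t => ‖(1 : Matrix (Fin r) (Fin r) ℂ)‖ * Real.exp (-t)
      + t ^ ‖M‖ * Real.exp (-(1:ℝ) * t))
    · filter_upwards [eventually_ge_atTop (1:ℝ)] with t ht
      rw [hgdef]
      simp only []
      rw [norm_smul, Real.norm_eq_abs, abs_of_pos (Real.exp_pos _)]
      have := norm_matRPow_le_rpow M ht
      calc Real.exp (-t) * ‖matRPow M t‖
          ≤ Real.exp (-t) * (‖(1 : Matrix (Fin r) (Fin r) ℂ)‖ + t ^ ‖M‖) :=
            mul_le_mul_of_nonneg_left this (Real.exp_pos _).le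
        _ = ‖(1 : Matrix (Fin r) (Fin r) ℂ)‖ * Real.exp (-t) + t ^ ‖M‖ * Real.exp (-(1:ℝ) * t) := by
            rw [neg_one_mul]; ring
    · have l1 : Tendsto (fun t : ℝ => ‖(1 : Matrix (Fin r) (Fin r) ℂ)‖ * Real.exp (-t)) atTop (nhds 0) := by
        have := Real.tendsto_exp_neg_atTop_nhds_zero.const_mul ‖(1 : Matrix (Fin r) (Fin r) ℂ)‖
        simpa using this
      have l2 := tendsto_rpow_mul_exp_neg_mul_atTop_nhds_zero ‖M‖ 1 one_pos
      simpa using l1.add l2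
  have hlim_zero : Tendsto g (nhdsWithin 0 (Ioi 0)) (nhds 0) := by
    obtain ⟨c, ε, hc, hε, hbd⟩ := matRPow_decay hM
    apply squeeze_zero_norm' (a := fun t => c * Real.exp (ε * Real.log t))
    · filter_upwards [Ioc_mem_nhdsGT_of_mem (Set.left_mem_Ico.2 one_pos)] with t htm
      obtain ⟨ht0, ht1⟩ := htm
      rw [hgdef]
      simp only []
      rw [norm_smul, Real.norm_eq_abs, abs_of_pos (Real.exp_pos _)]
      have hb := hbd t ht0 ht1
      have hexple : Real.exp (-t) ≤ 1 := Real.exp_le_one_iff.2 (by linarith)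
      calc Real.exp (-t) * ‖matRPow M t‖ ≤ 1 * (c * t ^ ε) :=
            mul_le_mul hexple hb (norm_nonneg _) one_pos.le
        _ = c * Real.exp (ε * Real.log t) := by
            rw [one_mul, Real.rpow_def_of_pos ht0, mul_comm (Real.log t) ε]
    · have hlog : Tendsto (fun t : ℝ => ε * Real.log t) (nhdsWithin 0 (Ioi 0)) atBot := by
        exact (Real.tendsto_log_nhdsGT_zero).const_mul_atBot hε
      have := (Real.tendsto_exp_atBot.comp hlog).const_mul c
      simpa using this
  -- FTC on Ioi a and limit a → 0
  have hFTC : ∀ a : ℝ, 0 < a → ∫ t in Ioi a, (φ t - g t) = - g a := by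
    intro a ha
    have hca : ContinuousWithinAt g (Ici a) a :=
      ((hderiv a ha).continuousAt).continuousWithinAt
    have hda : ∀ x ∈ Ioi a, HasDerivAt g (φ x - g x) x :=
      fun x hx => hderiv x (lt_trans ha hx)
    have hia : IntegrableOn (fun t => φ t - g t) (Ioi a) :=
      MeasureTheory.IntegrableOn.mono_set (hint_φ.sub hint_g) (Ioi_subset_Ioi ha.le)
    have := integral_Ioi_of_hasDerivAt_of_tendsto hca hda hia hlim_top
    rw [this, zero_sub]
  have key : ∫ t in Ioi (0:ℝ), (φ t - g t) = 0 := by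
    set S : ℕ → ℝ := fun n => 1 / (n + 1) with hSdef
    have hSpos : ∀ n, 0 < S n := fun n => by positivity
    have hmono : Monotone (fun n => Ioi (S n)) := by
      intro n m hnm
      apply Ioi_subset_Ioi
      apply one_div_le_one_div_of_le (by positivity)
      exact_mod_cast by omega
    have hunion : ⋃ n, Ioi (S n) = Ioi (0:ℝ) := by
      ext x
      simp only [mem_iUnion, mem_Ioi]
      constructor
      · rintro ⟨n, hn⟩; exact lt_trans (hSpos n) hn
      · intro hx
        obtain ⟨n, hn⟩ := exists_nat_one_div_lt hx
        exact ⟨n, hn⟩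
    have hintu : IntegrableOn (fun t => φ t - g t) (⋃ n, Ioi (S n)) := by
      rw [hunion]; exact hint_φ.sub hint_g
    have htend := tendsto_setIntegral_of_monotone (fun n => measurableSet_Ioi) hmono hintu
    rw [hunion] at htend
    have htend2 : Tendsto (fun n => ∫ t in Ioi (S n), (φ t - g t)) atTop (nhds 0) := by
      have hSn : Tendsto S atTop (nhdsWithin 0 (Ioi 0)) := by
        apply tendsto_nhdsWithin_of_tendsto_nhds_of_eventually_within
        · exact tendsto_one_div_add_atTop_nhds_zero_nat
        · exact Filter.Eventually.of_forall (fun n => hSpos n)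
      have : Tendsto (fun n => - g (S n)) atTop (nhds 0) := by
        have := (hlim_zero.comp hSn).neg
        simpa using this
      apply this.congr
      intro n
      rw [hFTC (S n) (hSpos n)]
    exact tendsto_nhds_unique htend htend2
  -- conclude
  have hsplit : ∫ t in Ioi (0:ℝ), (φ t - g t)
      = (∫ t in Ioi (0:ℝ), φ t) - ∫ t in Ioi (0:ℝ), g t := integral_sub hint_φ hint_g
  have hφint : ∫ t in Ioi (0:ℝ), φ t = M * matGamma M := by
    have h1 : ∫ t in Ioi (0:ℝ), φ t
        = ∫ t in Ioi (0:ℝ), L (Real.exp (-t) • matRPow (M - 1) t) := by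
      apply setIntegral_congr_fun measurableSet_Ioi
      intro t _; exact hφeq t
    rw [h1, ContinuousLinearMap.integral_comp_comm L hint_base]
    rfl
  have hgint : ∫ t in Ioi (0:ℝ), g t = matGamma (M + 1) := by
    rw [matGamma]
    apply setIntegral_congr_fun measurableSet_Ioi
    intro t _
    rw [hgdef, add_sub_cancel_right]
  rw [hsplit, hφint, hgint] at key
  exact (sub_eq_zero.mp key).symm
lemma posStable_isUnit {M : Matrix (Fin r) (Fin r) ℂ} (hM : PosStable M) : IsUnit M := by
  by_contra hn
  have h0 : (0 : ℂ) ∈ spectrum ℂ M := (spectrum.zero_mem_iff ℂ).2 hn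
  simpa using hM 0 h0

lemma commute_inv {X A : Matrix (Fin r) (Fin r) ℂ} (h : Commute X A) : Commute X A⁻¹ := by
  by_cases hA : IsUnit A.det
  · have h1 : A⁻¹ * A = 1 := Matrix.nonsing_inv_mul A hA
    have h2 : A * A⁻¹ = 1 := Matrix.mul_nonsing_inv A hA
    show X * A⁻¹ = A⁻¹ * X
    calc X * A⁻¹ = A⁻¹ * A * (X * A⁻¹) := by rw [h1, one_mul]
      _ = A⁻¹ * (X * A) * A⁻¹ := by rw [h.eq]; noncomm_ring
      _ = A⁻¹ * X * (A * A⁻¹) := by noncomm_ring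
      _ = A⁻¹ * X := by rw [h2, mul_one]
  · rw [Matrix.nonsing_inv_apply_not_isUnit A hA]
    exact Commute.zero_right X

lemma commute_matGamma {M : Matrix (Fin r) (Fin r) ℂ} (hM : PosStable M)
    {X : Matrix (Fin r) (Fin r) ℂ} (hX : Commute X (M - 1)) : Commute X (matGamma M) := by
  have hint := gammaIntegrand_integrable hM
  have hcomm : ∀ t : ℝ, Commute X (Real.exp (-t) • matRPow (M - 1) t) := by
    intro t
    have h1 : Commute X ((Real.log t : ℂ) • (M - 1)) := hX.smul_right _
    exact (h1.exp_right).smul_right _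
  set L : Matrix (Fin r) (Fin r) ℂ →L[ℂ] Matrix (Fin r) (Fin r) ℂ :=
    ContinuousLinearMap.mul ℂ (Matrix (Fin r) (Fin r) ℂ) X with hL
  set R : Matrix (Fin r) (Fin r) ℂ →L[ℂ] Matrix (Fin r) (Fin r) ℂ :=
    (ContinuousLinearMap.mul ℂ (Matrix (Fin r) (Fin r) ℂ)).flip X with hR
  show X * matGamma M = matGamma M * X
  have hLint := L.integral_comp_comm hint
  have hRint := R.integral_comp_comm hint
  have hLf : ∀ t : ℝ, L (Real.exp (-t) • matRPow (M - 1) t)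
      = X * (Real.exp (-t) • matRPow (M - 1) t) := fun t => rfl
  have hRf : ∀ t : ℝ, R (Real.exp (-t) • matRPow (M - 1) t)
      = (Real.exp (-t) • matRPow (M - 1) t) * X := fun t => rfl
  calc X * matGamma M = L (matGamma M) := rfl
    _ = ∫ t in Ioi (0:ℝ), L (Real.exp (-t) • matRPow (M - 1) t) := (hLint).symm
    _ = ∫ t in Ioi (0:ℝ), R (Real.exp (-t) • matRPow (M - 1) t) := by
        apply setIntegral_congr_fun measurableSet_Ioi
        intro t _
        exact (hcomm t).eq
    _ = R (matGamma M) := hRint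
    _ = matGamma M * X := rfl

lemma matGamma_inv_rel {M : Matrix (Fin r) (Fin r) ℂ} (hM : PosStable M)
    (hM1 : PosStable (M - 1)) :
    (matGamma (M - 1))⁻¹ = (M - 1) * (matGamma M)⁻¹ := by
  have hfe : matGamma M = (M - 1) * matGamma (M - 1) := by
    have := matGamma_succ hM1
    rwa [sub_add_cancel] at this
  have hunit : IsUnit (M - 1) := posStable_isUnit hM1
  have hudet : IsUnit (M - 1).det := (Matrix.isUnit_iff_isUnit_det _).1 hunit
  have hGm : matGamma (M - 1) = (M - 1)⁻¹ * matGamma M := by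
    rw [hfe, ← mul_assoc, Matrix.nonsing_inv_mul _ hudet, one_mul]
  have hcomm : Commute (M - 1) (matGamma M) := commute_matGamma hM (Commute.refl _)
  have hcomm_inv : Commute (M - 1) (matGamma M)⁻¹ := commute_inv hcomm
  rw [hGm, Matrix.mul_inv_rev, Matrix.nonsing_inv_nonsing_inv _ hudet]
  exact hcomm_inv.symm.eq
lemma Rcoeff_rel {p q : ℕ} (A B : Matrix (Fin r) (Fin r) ℂ)
    (C : Fin p → Matrix (Fin r) (Fin r) ℂ) (D : Fin q → Matrix (Fin r) (Fin r) ℂ)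
    (hGamma : ∀ n : ℕ, PosStable ((n : ℂ) • A + B))
    (hGamma' : ∀ n : ℕ, PosStable ((n : ℂ) • A + (B - 1))) (n : ℕ) :
    Rcoeff A (B - 1) C D n = ((n : ℂ) • A + B - 1) * Rcoeff A B C D n := by
  have hM1 : ((n : ℂ) • A + (B - 1)) = ((n : ℂ) • A + B) - 1 := by abel
  have hps : PosStable (((n : ℂ) • A + B) - 1) := by rw [← hM1]; exact hGamma' n
  have hrel := matGamma_inv_rel (hGamma n) hps
  unfold Rcoeff
  rw [hM1, hrel, mul_assoc, mul_assoc, mul_assoc]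

end PRqAux

open PRqAux MeasureTheory Set Filter

/-- The differential formula `z A (d/dz) ₚR_q(A,B;z) = ₚR_q(A,B−I;z) − (B−I) ₚR_q(A,B;z)`. -/
theorem pRq_zA_deriv {r p q : ℕ}
    (A B : Matrix (Fin r) (Fin r) ℂ)
    (C : Fin p → Matrix (Fin r) (Fin r) ℂ) (D : Fin q → Matrix (Fin r) (Fin r) ℂ)
    (hDinv : ∀ (j : Fin q) (k : ℕ),
      IsUnit (D j + (k : ℂ) • (1 : Matrix (Fin r) (Fin r) ℂ)))
    (hA : PosStable A) (hB : PosStable (B - 1))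
    (hGamma : ∀ n : ℕ, PosStable ((n : ℂ) • A + B))
    (hGamma' : ∀ n : ℕ, PosStable ((n : ℂ) • A + (B - 1)))
    (hAB : A * B = B * A)
    (z : ℂ) (hz : InRegion A B C D z) :
    z • (A * deriv (Rfun A B C D) z)
      = Rfun A (B - 1) C D z - (B - 1) * Rfun A B C D z := by
  classical
  obtain ⟨ρ, hzρ, hsum⟩ := hz
  have hρ0 : 0 < ρ := lt_of_le_of_lt (norm_nonneg z) hzρ
  set coeff : ℕ → Matrix (Fin r) (Fin r) ℂ := Rcoeff A B C D with hcoeff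
  set coeff' : ℕ → Matrix (Fin r) (Fin r) ℂ := Rcoeff A (B - 1) C D with hcoeff'
  set ρ' : ℝ := (‖z‖ + ρ) / 2 with hρ'def
  have hzρ' : ‖z‖ < ρ' := by rw [hρ'def]; linarith
  have hρ'ρ : ρ' < ρ := by rw [hρ'def]; linarith
  have hρ'0 : 0 < ρ' := lt_of_le_of_lt (norm_nonneg z) hzρ'
  -- bound on n * (ρ'/ρ)^n
  have hxlt : |ρ' / ρ| < 1 := by
    rw [abs_of_pos (by positivity)]
    rw [div_lt_one hρ0]; exact hρ'ρ
  have hsummgeo : Summable (fun n : ℕ => (n : ℝ) ^ 1 * (ρ' / ρ) ^ n) :=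
    summable_pow_mul_geometric_of_norm_lt_one 1 (by rwa [Real.norm_eq_abs])
  have htend0 : Tendsto (fun n : ℕ => (n : ℝ) ^ 1 * (ρ' / ρ) ^ n) atTop (nhds 0) :=
    hsummgeo.tendsto_atTop_zero
  obtain ⟨K₀, hK₀⟩ := htend0.bddAbove_range
  have hK₀' : ∀ n : ℕ, (n : ℝ) * (ρ' / ρ) ^ n ≤ K₀ := by
    intro n
    have := hK₀ (Set.mem_range_self (f := fun n : ℕ => (n : ℝ) ^ 1 * (ρ' / ρ) ^ n) n)
    simpa using this
  have hK0nn : (0:ℝ) ≤ K₀ := le_trans (by simp) (hK₀' 0)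
  -- series data
  set g : ℕ → ℂ → Matrix (Fin r) (Fin r) ℂ :=
    fun n w => (w ^ n / (n.factorial : ℂ)) • coeff n with hgdef
  set g' : ℕ → ℂ → Matrix (Fin r) (Fin r) ℂ :=
    fun n w => (((n : ℂ) * w ^ (n - 1)) / (n.factorial : ℂ)) • coeff n with hg'def
  set u : ℕ → ℝ := fun n => (n : ℝ) * ρ' ^ (n - 1) / (n.factorial : ℝ) * ‖coeff n‖ with hudef
  have hkey : ∀ n : ℕ, (n : ℝ) * ρ' ^ (n - 1) ≤ K₀ * ρ ^ n / ρ' := by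
    intro n
    cases n with
    | zero => simp; positivity
    | succ m =>
      have h1 : ((m+1 : ℕ) : ℝ) * (ρ' / ρ) ^ (m+1) ≤ K₀ := hK₀' (m+1)
      have hρpow : (0:ℝ) < ρ ^ (m+1) := by positivity
      rw [div_pow, ← mul_div_assoc, div_le_iff₀ hρpow] at h1
      rw [le_div_iff₀ hρ'0, Nat.succ_sub_one]
      calc ((m+1 : ℕ) : ℝ) * ρ' ^ m * ρ' = ((m+1 : ℕ) : ℝ) * ρ' ^ (m+1) := by ring
        _ ≤ K₀ * ρ ^ (m+1) := h1
  have hu : Summable u := by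
    refine Summable.of_nonneg_of_le (fun n => by positivity) (fun n => ?_) (hsum.mul_left (K₀ / ρ'))
    calc u n = ((n : ℝ) * ρ' ^ (n-1)) * (‖coeff n‖ / (n.factorial : ℝ)) := by
          rw [hudef]; ring
      _ ≤ (K₀ * ρ ^ n / ρ') * (‖coeff n‖ / (n.factorial : ℝ)) :=
          mul_le_mul_of_nonneg_right (hkey n) (by positivity)
      _ = K₀ / ρ' * (‖coeff n‖ * ρ ^ n / (n.factorial : ℝ)) := by ring
  -- derivatives of the terms
  have hgderiv : ∀ (n : ℕ) (w : ℂ), w ∈ Metric.ball (0:ℂ) ρ' → HasDerivAt (g n) (g' n w) w := by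
    intro n w _
    have h1 : HasDerivAt (fun w : ℂ => w ^ n / (n.factorial : ℂ))
        ((n : ℂ) * w ^ (n - 1) / (n.factorial : ℂ)) w := (hasDerivAt_pow n w).div_const _
    exact h1.smul_const (coeff n)
  have hg'bound : ∀ (n : ℕ) (w : ℂ), w ∈ Metric.ball (0:ℂ) ρ' → ‖g' n w‖ ≤ u n := by
    intro n w hw
    rw [mem_ball_zero_iff] at hw
    rw [hg'def]
    simp only []
    rw [norm_smul, hudef]
    simp only []
    rw [norm_div, norm_mul, Complex.norm_natCast, norm_pow]
    apply mul_le_mul_of_nonneg_right _ (norm_nonneg _)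
    rw [Complex.norm_natCast]
    apply div_le_div_of_nonneg_right ?_ (by positivity)
    · exact mul_le_mul_of_nonneg_left (pow_le_pow_left₀ (norm_nonneg w) hw.le _) (Nat.cast_nonneg n)
  have hgnormle : ∀ (n : ℕ) (w : ℂ), ‖w‖ ≤ ρ → ‖g n w‖ ≤ ‖coeff n‖ * ρ ^ n / (n.factorial : ℝ) := by
    intro n w hw
    rw [hgdef]
    simp only []
    calc ‖(w ^ n / (n.factorial : ℂ)) • coeff n‖
        = ‖w‖ ^ n / (n.factorial : ℝ) * ‖coeff n‖ := by
          rw [norm_smul, norm_div, norm_pow, Complex.norm_natCast]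
      _ ≤ ρ ^ n / (n.factorial : ℝ) * ‖coeff n‖ := by
          apply mul_le_mul_of_nonneg_right _ (norm_nonneg _)
          apply div_le_div_of_nonneg_right ?_ (by positivity)
          exact pow_le_pow_left₀ (norm_nonneg w) hw n
      _ = ‖coeff n‖ * ρ ^ n / (n.factorial : ℝ) := by ring
  have hg0 : Summable fun n => g n z := by
    apply Summable.of_norm_bounded hsum
    intro n
    exact hgnormle n z (le_of_lt hzρ)
  -- derivative of Rfun via term-by-term differentiation
  have hball_open : IsOpen (Metric.ball (0:ℂ) ρ') := Metric.isOpen_ball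
  have hball_conn : IsPreconnected (Metric.ball (0:ℂ) ρ') := (convex_ball (0:ℂ) ρ').isPreconnected
  have hzball : z ∈ Metric.ball (0:ℂ) ρ' := mem_ball_zero_iff.2 hzρ'
  have hDeriv : HasDerivAt (fun w => ∑' n, g n w) (∑' n, g' n z) z :=
    hasDerivAt_tsum_of_isPreconnected hu hball_open hball_conn hgderiv hg'bound hzball hg0 hzball
  have hderiv_val : deriv (Rfun A B C D) z = ∑' n, g' n z := by
    have : Rfun A B C D = fun w => ∑' n, g n w := rfl
    rw [this]
    exact hDeriv.deriv
  have hg'z : Summable fun n => g' n z :=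
    Summable.of_norm_bounded hu (fun n => hg'bound n z hzball)
  set LA : Matrix (Fin r) (Fin r) ℂ →L[ℂ] Matrix (Fin r) (Fin r) ℂ :=
    ContinuousLinearMap.mul ℂ (Matrix (Fin r) (Fin r) ℂ) A with hLA
  set LB : Matrix (Fin r) (Fin r) ℂ →L[ℂ] Matrix (Fin r) (Fin r) ℂ :=
    ContinuousLinearMap.mul ℂ (Matrix (Fin r) (Fin r) ℂ) (B - 1) with hLB
  have hsumA : Summable fun n => A * g' n z := hg'z.map LA LA.continuous
  have hmulA : A * (∑' n, g' n z) = ∑' n, A * g' n z := (LA.map_tsum hg'z : _)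
  -- per-term identity
  have hscal : ∀ n : ℕ, z * ((n : ℂ) * z ^ (n-1) / (n.factorial : ℂ))
      = (n : ℂ) * z ^ n / (n.factorial : ℂ) := by
    intro n
    cases n with
    | zero => simp
    | succ m =>
      rw [Nat.succ_sub_one]
      field_simp
      ring
  have hterm : ∀ n : ℕ, z • (A * g' n z)
      = (z ^ n / (n.factorial : ℂ)) • coeff' n
        - (z ^ n / (n.factorial : ℂ)) • ((B - 1) * coeff n) := by
    intro n
    have hrel : coeff' n = ((n : ℂ) • A + B - 1) * coeff n := by
      rw [hcoeff', hcoeff]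
      exact Rcoeff_rel A B C D hGamma hGamma' n
    have lhs_eq : z • (A * g' n z) = ((n : ℂ) * z ^ n / (n.factorial : ℂ)) • (A * coeff n) := by
      rw [hg'def]
      simp only []
      rw [mul_smul_comm, smul_smul, hscal n]
    have rhs_eq : (z ^ n / (n.factorial : ℂ)) • coeff' n
        - (z ^ n / (n.factorial : ℂ)) • ((B - 1) * coeff n)
        = ((n : ℂ) * z ^ n / (n.factorial : ℂ)) • (A * coeff n) := by
      rw [hrel, ← smul_sub, ← sub_mul]
      have hmat : ((n : ℂ) • A + B - 1) - (B - 1) = (n : ℂ) • A := by abel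
      rw [hmat, smul_mul_assoc, smul_smul]
      congr 1
      ring
    rw [lhs_eq, rhs_eq]
  have hsum1 : Summable fun n => (z ^ n / (n.factorial : ℂ)) • ((B - 1) * coeff n) := by
    have h1 : Summable fun n => (B - 1) * g n z := hg0.map LB LB.continuous
    apply h1.congr
    intro n
    rw [hgdef]
    simp only []
    rw [mul_smul_comm]
  have hsum2 : Summable fun n => (z ^ n / (n.factorial : ℂ)) • coeff' n := by
    have h1 : Summable fun n => z • (A * g' n z) := hsumA.const_smul z
    apply (h1.add hsum1).congr
    intro n
    rw [← sub_add_cancel ((z ^ n / (n.factorial : ℂ)) • coeff' n)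
      ((z ^ n / (n.factorial : ℂ)) • ((B - 1) * coeff n)), ← hterm n]
  have hBRfun : ∑' n, (z ^ n / (n.factorial : ℂ)) • ((B - 1) * coeff n)
      = (B - 1) * Rfun A B C D z := by
    have h2 : (∑' n, (z ^ n / (n.factorial : ℂ)) • ((B - 1) * coeff n)) = ∑' n, LB (g n z) := by
      apply tsum_congr
      intro n
      rw [hgdef]
      simp only []
      rw [← mul_smul_comm]
      rfl
    rw [h2, ← (LB.map_tsum hg0 : _)]
    rfl
  calc z • (A * deriv (Rfun A B C D) z)
      = z • (A * ∑' n, g' n z) := by rw [hderiv_val]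
    _ = z • (∑' n, A * g' n z) := by rw [hmulA]
    _ = ∑' n, z • (A * g' n z) := (Summable.tsum_const_smul z hsumA).symm
    _ = ∑' n, ((z ^ n / (n.factorial : ℂ)) • coeff' n
        - (z ^ n / (n.factorial : ℂ)) • ((B - 1) * coeff n)) := tsum_congr hterm
    _ = (∑' n, (z ^ n / (n.factorial : ℂ)) • coeff' n)
        - ∑' n, (z ^ n / (n.factorial : ℂ)) • ((B - 1) * coeff n) := Summable.tsum_sub hsum2 hsum1
    _ = Rfun A (B - 1) C D z - (B - 1) * Rfun A B C D z := by rw [hBRfun]; rfl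

end
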